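/- Let n ≥ sk and let F_1, ..., F_s be families of k-element subsets of [n] that are cross-dependent (there is no choice of pairwise disjoint sets F_1 ∈ F_1, ..., F_s ∈ F_s). Then Σ_{i=1}^{s} |F_i| ≤ (s−1)·C(n,k). -/

import Mathlib

open Finset

/-- Piecewise permutation-like map built from two equivalences. -/
private noncomputable def pmap10 (S C : Finset ℕ) {S' C' : Finset ℕ}
    (φ : ↥S ≃ ↥S') (ψ : ↥C ≃ ↥C') (x : ℕ) : ℕ :=
  if h : x ∈ S then (φ ⟨x, h⟩ : ℕ) else if h : x ∈ C then (ψ ⟨x, h⟩ : ℕ) else x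

private lemma pmap10_inv {S C S' C' : Finset ℕ} (φ : ↥S ≃ ↥S') (ψ : ↥C ≃ ↥C')
    (hd : Disjoint S' C') {x : ℕ} (hx : x ∈ S ∨ x ∈ C) :
    pmap10 S' C' φ.symm ψ.symm (pmap10 S C φ ψ x) = x := by
  by_cases hS : x ∈ S
  · have e1 : pmap10 S C φ ψ x = (φ ⟨x, hS⟩ : ℕ) := by rw [pmap10]; rw [dif_pos hS]
    have h1 : (φ ⟨x, hS⟩ : ℕ) ∈ S' := (φ ⟨x, hS⟩).2
    rw [e1, pmap10, dif_pos h1]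
    have h2 : (⟨(φ ⟨x, hS⟩ : ℕ), h1⟩ : ↥S') = φ ⟨x, hS⟩ := rfl
    rw [h2, Equiv.symm_apply_apply]
  · have hC : x ∈ C := hx.resolve_left hS
    have e1 : pmap10 S C φ ψ x = (ψ ⟨x, hC⟩ : ℕ) := by
      rw [pmap10]; rw [dif_neg hS, dif_pos hC]
    have h1 : (ψ ⟨x, hC⟩ : ℕ) ∈ C' := (ψ ⟨x, hC⟩).2
    have h2 : (ψ ⟨x, hC⟩ : ℕ) ∉ S' := fun hs => (disjoint_left.mp hd hs) h1
    rw [e1, pmap10, dif_neg h2, dif_pos h1]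
    have h3 : (⟨(ψ ⟨x, hC⟩ : ℕ), h1⟩ : ↥C') = ψ ⟨x, hC⟩ := rfl
    rw [h3, Equiv.symm_apply_apply]

/-- Key symmetry: there is a pair of mutually inverse self-maps of `Icc 1 n`
carrying `S` to `S'`. -/
private lemma exists_uv10 (n : ℕ) (S S' : Finset ℕ) (hS : S ⊆ Icc 1 n)
    (hS' : S' ⊆ Icc 1 n) (hc : S.card = S'.card) :
    ∃ u v : ℕ → ℕ,
      (∀ x ∈ Icc 1 n, u x ∈ Icc 1 n) ∧ (∀ x ∈ Icc 1 n, v x ∈ Icc 1 n) ∧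
      (∀ x ∈ Icc 1 n, v (u x) = x) ∧ (∀ x ∈ Icc 1 n, u (v x) = x) ∧
      S.image u = S' := by
  have hcC : (Icc 1 n \ S).card = (Icc 1 n \ S').card := by
    rw [card_sdiff_of_subset hS, card_sdiff_of_subset hS', hc]
  set φ : ↥S ≃ ↥S' := Finset.equivOfCardEq hc with hφ
  set ψ : ↥(Icc 1 n \ S) ≃ ↥(Icc 1 n \ S') := Finset.equivOfCardEq hcC with hψ
  set u := pmap10 S (Icc 1 n \ S) φ ψ with hu
  set v := pmap10 S' (Icc 1 n \ S') φ.symm ψ.symm with hv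
  have hdisj : ∀ (A : Finset ℕ), Disjoint A (Icc 1 n \ A) := by
    intro A
    exact disjoint_sdiff
  have hcases : ∀ x ∈ Icc 1 n, x ∈ S ∨ x ∈ Icc 1 n \ S := by
    intro x hx
    by_cases h : x ∈ S
    · exact Or.inl h
    · exact Or.inr (mem_sdiff.mpr ⟨hx, h⟩)
  have hcases' : ∀ x ∈ Icc 1 n, x ∈ S' ∨ x ∈ Icc 1 n \ S' := by
    intro x hx
    by_cases h : x ∈ S'
    · exact Or.inl h
    · exact Or.inr (mem_sdiff.mpr ⟨hx, h⟩)
  have humem : ∀ x ∈ Icc 1 n, u x ∈ Icc 1 n := by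
    intro x hx
    rcases hcases x hx with h | h
    · rw [hu, pmap10, dif_pos h]
      exact hS' (φ ⟨x, h⟩).2
    · rw [hu, pmap10, dif_neg (fun hs => (disjoint_left.mp (hdisj S)) hs h), dif_pos h]
      exact (mem_sdiff.mp (ψ ⟨x, h⟩).2).1
  have hvmem : ∀ x ∈ Icc 1 n, v x ∈ Icc 1 n := by
    intro x hx
    rcases hcases' x hx with h | h
    · rw [hv, pmap10, dif_pos h]
      exact hS (φ.symm ⟨x, h⟩).2
    · rw [hv, pmap10, dif_neg (fun hs => (disjoint_left.mp (hdisj S')) hs h), dif_pos h]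
      exact (mem_sdiff.mp (ψ.symm ⟨x, h⟩).2).1
  have hvu : ∀ x ∈ Icc 1 n, v (u x) = x := by
    intro x hx
    exact pmap10_inv φ ψ (hdisj S') (hcases x hx)
  have huv : ∀ x ∈ Icc 1 n, u (v x) = x := by
    intro x hx
    have := pmap10_inv φ.symm ψ.symm (hdisj S) (hcases' x hx)
    simpa [hu, hv] using this
  refine ⟨u, v, humem, hvmem, hvu, huv, ?_⟩
  apply Subset.antisymm
  · intro y hy
    obtain ⟨x, hx, rfl⟩ := mem_image.mp hy
    rw [hu, pmap10, dif_pos hx]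
    exact (φ ⟨x, hx⟩).2
  · intro y hy
    refine mem_image.mpr ⟨v y, ?_, huv y (hS' hy)⟩
    rw [hv, pmap10, dif_pos hy]
    exact (φ.symm ⟨y, hy⟩).2

set_option maxHeartbeats 2000000 in
/-- Cross-dependent averaging: if `F₁,…,F_s` are families of `k`-subsets of
`[n]`, `n ≥ sk`, with no system of pairwise disjoint representatives, then
`Σ|F_i| ≤ (s-1)·C(n,k)`. -/
theorem stmt10 (n k s : ℕ) (hn : s * k ≤ n)
    (F : Fin s → Finset (Finset ℕ))
    (hF : ∀ i, F i ⊆ (Finset.Icc 1 n).powersetCard k)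
    (hcross : ¬ ∃ f : Fin s → Finset ℕ, (∀ i, f i ∈ F i) ∧
        ∀ i j, i ≠ j → Disjoint (f i) (f j)) :
    ∑ i, (F i).card ≤ (s - 1) * Nat.choose n k := by
  classical
  -- dispatch s = 0
  rcases Nat.eq_zero_or_pos s with hs0 | hs
  · subst hs0
    exact absurd ⟨fun i => i.elim0, fun i => i.elim0, fun i => i.elim0⟩ hcross
  set A : Finset (Finset ℕ) := (Icc 1 n).powersetCard k with hA
  set T : Finset (Fin s → Finset ℕ) :=
    (Fintype.piFinset fun _ : Fin s => A).filter
      (fun f => ∀ i j, i ≠ j → Disjoint (f i) (f j)) with hT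
  have memT : ∀ f, f ∈ T ↔ (∀ i, f i ∈ A) ∧ ∀ i j, i ≠ j → Disjoint (f i) (f j) := by
    intro f
    simp [hT, Fintype.mem_piFinset]
  have memA : ∀ S, S ∈ A ↔ S ⊆ Icc 1 n ∧ S.card = k := by
    intro S
    simp [hA, mem_powersetCard]
  -- T is nonempty
  have hTne : T.Nonempty := by
    refine ⟨fun i => Finset.Ioc (i.1 * k) (i.1 * k + k), (memT _).mpr ⟨?_, ?_⟩⟩
    · intro i
      refine (memA _).mpr ⟨?_, by simp⟩
      intro x hx
      rw [mem_Ioc] at hx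
      have h1 : i.1 * k + k ≤ s * k := by
        have : i.1 + 1 ≤ s := i.2
        calc i.1 * k + k = (i.1 + 1) * k := by ring
          _ ≤ s * k := Nat.mul_le_mul_right k this
      exact mem_Icc.mpr ⟨by omega, by omega⟩
    · intro i j hij
      rw [disjoint_left]
      intro x hxi hxj
      rw [mem_Ioc] at hxi hxj
      have hne : i.1 ≠ j.1 := fun h => hij (Fin.ext h)
      rcases Nat.lt_or_ge i.1 j.1 with h | h
      · have : i.1 * k + k ≤ j.1 * k := by
          calc i.1 * k + k = (i.1 + 1) * k := by ring
            _ ≤ j.1 * k := Nat.mul_le_mul_right k h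
        omega
      · have h' : j.1 < i.1 := by omega
        have : j.1 * k + k ≤ i.1 * k := by
          calc j.1 * k + k = (j.1 + 1) * k := by ring
            _ ≤ i.1 * k := Nat.mul_le_mul_right k h'
        omega
  -- fibers of T over a fixed coordinate are equinumerous
  have hconst : ∀ (i : Fin s) (S S' : Finset ℕ), S ∈ A → S' ∈ A →
      (T.filter fun f => f i = S).card = (T.filter fun f => f i = S').card := by
    intro i S S' hSA hS'A
    obtain ⟨hS, hScard⟩ := (memA S).mp hSA
    obtain ⟨hS', hS'card⟩ := (memA S').mp hS'A
    obtain ⟨u, v, humem, hvmem, hvu, huv, himg⟩ :=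
      exists_uv10 n S S' hS hS' (by rw [hScard, hS'card])
    -- image of a subset of Icc under u, then v, returns it
    have himage_vu : ∀ t : Finset ℕ, t ⊆ Icc 1 n → (t.image u).image v = t := by
      intro t ht
      rw [image_image]
      have : t.image (v ∘ u) = t.image id := by
        apply image_congr
        intro x hx
        exact hvu x (ht hx)
      rw [this, image_id]
    have himage_uv : ∀ t : Finset ℕ, t ⊆ Icc 1 n → (t.image v).image u = t := by
      intro t ht
      rw [image_image]
      have : t.image (u ∘ v) = t.image id := by
        apply image_congr
        intro x hx
        exact huv x (ht hx)
      rw [this, image_id]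
    have hmemA_u : ∀ t : Finset ℕ, t ∈ A → t.image u ∈ A := by
      intro t htA
      obtain ⟨ht, htc⟩ := (memA t).mp htA
      refine (memA _).mpr ⟨?_, ?_⟩
      · intro y hy
        obtain ⟨x, hx, rfl⟩ := mem_image.mp hy
        exact humem x (ht hx)
      · rw [card_image_of_injOn, htc]
        intro x hx y hy hxy
        rw [← hvu x (ht hx), ← hvu y (ht hy), hxy]
    have hmemA_v : ∀ t : Finset ℕ, t ∈ A → t.image v ∈ A := by
      intro t htA
      obtain ⟨ht, htc⟩ := (memA t).mp htA
      refine (memA _).mpr ⟨?_, ?_⟩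
      · intro y hy
        obtain ⟨x, hx, rfl⟩ := mem_image.mp hy
        exact hvmem x (ht hx)
      · rw [card_image_of_injOn, htc]
        intro x hx y hy hxy
        rw [← huv x (ht hx), ← huv y (ht hy), hxy]
    have hdisj_u : ∀ t t' : Finset ℕ, t ⊆ Icc 1 n → t' ⊆ Icc 1 n →
        Disjoint t t' → Disjoint (t.image u) (t'.image u) := by
      intro t t' ht ht' hd
      rw [disjoint_left]
      intro y hy hy'
      obtain ⟨x, hx, rfl⟩ := mem_image.mp hy
      obtain ⟨x', hx', hxx⟩ := mem_image.mp hy'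
      have : x' = x := by rw [← hvu x (ht hx), ← hvu x' (ht' hx'), hxx]
      exact (disjoint_left.mp hd hx) (this ▸ hx')
    have hdisj_v : ∀ t t' : Finset ℕ, t ⊆ Icc 1 n → t' ⊆ Icc 1 n →
        Disjoint t t' → Disjoint (t.image v) (t'.image v) := by
      intro t t' ht ht' hd
      rw [disjoint_left]
      intro y hy hy'
      obtain ⟨x, hx, rfl⟩ := mem_image.mp hy
      obtain ⟨x', hx', hxx⟩ := mem_image.mp hy'
      have : x' = x := by rw [← huv x (ht hx), ← huv x' (ht' hx'), hxx]
      exact (disjoint_left.mp hd hx) (this ▸ hx')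
    have hsub : ∀ t : Finset ℕ, t ∈ A → t ⊆ Icc 1 n := fun t ht => ((memA t).mp ht).1
    have himg' : S'.image v = S := by
      rw [← himg]
      exact himage_vu S hS
    apply Finset.card_nbij' (fun f => fun j => (f j).image u)
      (fun g => fun j => (g j).image v)
    · intro f hf
      rw [mem_coe, mem_filter] at hf ⊢
      obtain ⟨hfT, hfi⟩ := hf
      obtain ⟨hfA, hfd⟩ := (memT f).mp hfT
      refine ⟨(memT _).mpr ⟨fun j => hmemA_u _ (hfA j), ?_⟩, by show image u (f i) = S'; rw [hfi, himg]⟩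
      intro a b hab
      exact hdisj_u _ _ (hsub _ (hfA a)) (hsub _ (hfA b)) (hfd a b hab)
    · intro g hg
      rw [mem_coe, mem_filter] at hg ⊢
      obtain ⟨hgT, hgi⟩ := hg
      obtain ⟨hgA, hgd⟩ := (memT g).mp hgT
      refine ⟨(memT _).mpr ⟨fun j => hmemA_v _ (hgA j), ?_⟩, by show image v (g i) = S; rw [hgi, himg']⟩
      intro a b hab
      exact hdisj_v _ _ (hsub _ (hgA a)) (hsub _ (hgA b)) (hgd a b hab)
    · intro f hf
      rw [mem_coe, mem_filter] at hf
      obtain ⟨hfA, _⟩ := (memT f).mp hf.1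
      funext j
      exact himage_vu _ (hsub _ (hfA j))
    · intro g hg
      rw [mem_coe, mem_filter] at hg
      obtain ⟨hgA, _⟩ := (memT g).mp hg.1
      funext j
      exact himage_uv _ (hsub _ (hgA j))
  -- each tuple in T hits at most s-1 families
  have hhit : ∀ f ∈ T, (univ.filter fun i : Fin s => f i ∈ F i).card ≤ s - 1 := by
    intro f hf
    obtain ⟨hfA, hfd⟩ := (memT f).mp hf
    by_contra h
    push_neg at h
    have hle : (univ.filter fun i : Fin s => f i ∈ F i).card ≤ s := by
      calc (univ.filter fun i : Fin s => f i ∈ F i).card ≤ (univ : Finset (Fin s)).card :=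
            card_filter_le _ _
        _ = s := by simp
    have heq : (univ.filter fun i : Fin s => f i ∈ F i).card = s := by omega
    have huniv : (univ.filter fun i : Fin s => f i ∈ F i) = univ := by
      apply Finset.eq_univ_of_card
      simpa using heq
    have hall : ∀ i, f i ∈ F i := by
      intro i
      have hm : i ∈ univ.filter fun i : Fin s => f i ∈ F i := by
        rw [huniv]; exact Finset.mem_univ i
      exact (Finset.mem_filter.mp hm).2
    exact hcross ⟨f, hall, hfd⟩
  -- counting
  have hsum1 : ∀ i : Fin s, (T.filter fun f => f i ∈ F i).card
      = ∑ S ∈ F i, (T.filter fun f => f i = S).card := by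
    intro i
    have h := Finset.card_eq_sum_card_fiberwise (s := T.filter fun f => f i ∈ F i)
      (t := F i) (f := fun f => f i)
      (fun f hf => mem_coe.mpr (mem_filter.mp (mem_coe.mp hf)).2)
    rw [h]
    apply Finset.sum_congr rfl
    intro S hS
    congr 1
    rw [filter_filter]
    apply filter_congr
    intro f _
    constructor
    · exact fun h => h.2
    · exact fun h => ⟨h ▸ hS, h⟩
  have hfiber_T : ∀ i : Fin s, ∑ S ∈ A, (T.filter fun f => f i = S).card = T.card := by
    intro i
    exact (Finset.card_eq_sum_card_fiberwise (f := fun f => f i) (t := A)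
      (fun f hf => ((memT f).mp hf).1 i)).symm
  -- the constant value: A.card * (fiber card) = T.card
  have hAT : ∀ (i : Fin s) (S : Finset ℕ), S ∈ A →
      A.card * (T.filter fun f => f i = S).card = T.card := by
    intro i S hS
    rw [← hfiber_T i]
    rw [Finset.sum_congr rfl (fun S' hS' => hconst i S' S hS' hS)]
    rw [Finset.sum_const, smul_eq_mul]
  -- main inequality
  have hmain : ∑ i, (T.filter fun f => f i ∈ F i).card ≤ (s - 1) * T.card := by
    have : ∀ i : Fin s, (T.filter fun f => f i ∈ F i).card
        = ∑ f ∈ T, (if f i ∈ F i then 1 else 0) := by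
      intro i
      rw [Finset.card_filter]
    calc ∑ i, (T.filter fun f => f i ∈ F i).card
        = ∑ i, ∑ f ∈ T, (if f i ∈ F i then 1 else 0) := by
          exact Finset.sum_congr rfl fun i _ => this i
      _ = ∑ f ∈ T, ∑ i, (if f i ∈ F i then 1 else 0) := Finset.sum_comm
      _ = ∑ f ∈ T, (univ.filter fun i : Fin s => f i ∈ F i).card := by
          apply Finset.sum_congr rfl
          intro f _
          rw [Finset.card_filter]
      _ ≤ ∑ f ∈ T, (s - 1) := Finset.sum_le_sum hhit
      _ = T.card * (s - 1) := by rw [Finset.sum_const, smul_eq_mul]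
      _ = (s - 1) * T.card := Nat.mul_comm _ _
  -- multiply through by A.card
  have hmul : (∑ i, (F i).card) * T.card ≤ (s - 1) * Nat.choose n k * T.card := by
    have hAcard : A.card = Nat.choose n k := by
      rw [hA, card_powersetCard, Nat.card_Icc]
      simp
    calc (∑ i, (F i).card) * T.card
        = ∑ i, (F i).card * T.card := by rw [Finset.sum_mul]
      _ = ∑ i, ∑ S ∈ F i, A.card * (T.filter fun f => f i = S).card := by
          apply Finset.sum_congr rfl
          intro i _
          have h2 : ∑ S ∈ F i, A.card * (T.filter fun f => f i = S).card
              = ∑ _S ∈ F i, T.card :=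
            Finset.sum_congr rfl (fun S hS => hAT i S (hF i hS))
          rw [h2, Finset.sum_const, smul_eq_mul, Nat.mul_comm]
      _ = A.card * ∑ i, ∑ S ∈ F i, (T.filter fun f => f i = S).card := by
          rw [Finset.mul_sum]
          apply Finset.sum_congr rfl
          intro i _
          rw [Finset.mul_sum]
      _ = A.card * ∑ i, (T.filter fun f => f i ∈ F i).card := by
          rw [Finset.sum_congr rfl (fun i _ => (hsum1 i).symm)]
      _ ≤ A.card * ((s - 1) * T.card) := Nat.mul_le_mul_left _ hmain
      _ = (s - 1) * Nat.choose n k * T.card := by rw [hAcard]; ring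
  have hTpos : 0 < T.card := Finset.card_pos.mpr hTne
  exact Nat.le_of_mul_le_mul_right hmul hTpos
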